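/- For ideals γ₁ and γ₂ of a commutative ring A, if γ₁ is strongly n-absorbing and γ₂ is strongly m-absorbing, then γ₁ ∩ γ₂ is strongly (n+m)-absorbing. -/

import Mathlib

def IsStronglyAbsorbing {A : Type*} [CommRing A] (α : Ideal A) (n : ℕ) : Prop :=
  ∀ γ : Fin (n + 1) → Ideal A, (∏ i, γ i) ≤ α →
    ∃ j, (∏ i ∈ Finset.univ.erase j, γ i) ≤ α

lemma prod_anti {A : Type*} [CommRing A] {ι : Type*} [DecidableEq ι] {t u : Finset ι}
    (h : t ⊆ u) (γ : ι → Ideal A) : ∏ i ∈ u, γ i ≤ ∏ i ∈ t, γ i := by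
  rw [← Finset.prod_sdiff h]
  exact Ideal.mul_le_right

lemma absorb_finset {A : Type*} [CommRing A] {α : Ideal A} {n : ℕ}
    (h : IsStronglyAbsorbing α n) {ι : Type*} [DecidableEq ι] (s : Finset ι)
    (hc : s.card = n + 1) (γ : ι → Ideal A) (hp : ∏ i ∈ s, γ i ≤ α) :
    ∃ j ∈ s, ∏ i ∈ s.erase j, γ i ≤ α := by
  let e : Fin (n + 1) ≃ s := (s.equivFinOfCardEq hc).symm
  have hinj : Function.Injective (fun i : Fin (n + 1) => (e i : ι)) := by
    intro a b hab
    exact e.injective (Subtype.ext hab)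
  have himg : ∀ T : Finset (Fin (n + 1)), T.image (fun i => (e i : ι)) ⊆ s := by
    intro T x hx
    simp only [Finset.mem_image] at hx
    obtain ⟨i, _, rfl⟩ := hx
    exact (e i).2
  have key : ∀ T : Finset (Fin (n + 1)),
      ∏ i ∈ T, γ (e i) = ∏ x ∈ T.image (fun i => (e i : ι)), γ x := by
    intro T
    rw [Finset.prod_image (fun a _ b _ hab => hinj hab)]
  have htot : (Finset.univ : Finset (Fin (n+1))).image (fun i => (e i : ι)) = s := by
    apply Finset.eq_of_subset_of_card_le (himg _)
    rw [hc, Finset.card_image_of_injective _ hinj, Finset.card_univ, Fintype.card_fin]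
  obtain ⟨j, hj⟩ := h (fun i => γ (e i)) (by rw [key, htot]; exact hp)
  refine ⟨e j, (e j).2, ?_⟩
  have herase : (Finset.univ.erase j).image (fun i => (e i : ι)) = s.erase (e j) := by
    ext x
    simp only [Finset.mem_image, Finset.mem_erase, Finset.mem_univ, and_true]
    constructor
    · rintro ⟨i, hi, rfl⟩
      exact ⟨fun hx => hi (hinj hx), (e i).2⟩
    · rintro ⟨hne, hxs⟩
      refine ⟨e.symm ⟨x, hxs⟩, ?_, by simp⟩
      intro hcon
      apply hne
      rw [← hcon]
      simp
  rw [key, herase] at hj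
  exact hj

lemma absorb_subset {A : Type*} [CommRing A] {α : Ideal A} {n : ℕ}
    (h : IsStronglyAbsorbing α n) {ι : Type*} [DecidableEq ι] :
    ∀ (s : Finset ι) (γ : ι → Ideal A), (∏ i ∈ s, γ i ≤ α) →
      ∃ t ⊆ s, t.card ≤ n ∧ ∏ i ∈ t, γ i ≤ α := by
  intro s
  induction s using Finset.strongInduction with
  | H s ih =>
    intro γ hp
    by_cases hcard : s.card ≤ n
    · exact ⟨s, le_refl s, hcard, hp⟩
    · push_neg at hcard
      obtain ⟨s₁, hs₁sub, hs₁card⟩ := Finset.exists_subset_card_eq (le_of_lt hcard)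
      have hr : (s \ s₁).Nonempty := by
        rw [← Finset.card_pos, Finset.card_sdiff_of_subset hs₁sub, hs₁card]
        omega
      obtain ⟨b, hb⟩ := hr
      have hbs : b ∈ s := (Finset.mem_sdiff.1 hb).1
      have hbs₁ : b ∉ s₁ := (Finset.mem_sdiff.1 hb).2
      set γ' : ι → Ideal A := fun i => if i = b then ∏ x ∈ s \ s₁, γ x else γ i with hγ'
      have hs₁eq : ∏ i ∈ s₁, γ' i = ∏ i ∈ s₁, γ i := by
        apply Finset.prod_congr rfl
        intro x hx
        have : x ≠ b := fun h => hbs₁ (h ▸ hx)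
        simp [hγ', this]
      have hprod : ∏ i ∈ insert b s₁, γ' i = ∏ i ∈ s, γ i := by
        rw [Finset.prod_insert hbs₁, hs₁eq]
        simp only [hγ', if_pos rfl]
        exact Finset.prod_sdiff hs₁sub
      have hcard2 : (insert b s₁).card = n + 1 := by
        rw [Finset.card_insert_of_notMem hbs₁, hs₁card]
      obtain ⟨j, hjmem, hj⟩ := absorb_finset h _ hcard2 γ' (hprod ▸ hp)
      by_cases hjb : j = b
      · subst hjb
        rw [Finset.erase_insert hbs₁, hs₁eq] at hj
        exact ⟨s₁, hs₁sub, le_of_eq hs₁card, hj⟩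
      · have hjs₁ : j ∈ s₁ := by
          rcases Finset.mem_insert.1 hjmem with h' | h'
          · exact absurd h' hjb
          · exact h'
        have hjs : j ∈ s := hs₁sub hjs₁
        have heq2 : (insert b s₁).erase j = insert b (s₁.erase j) := by
          ext x
          simp only [Finset.mem_erase, Finset.mem_insert]
          constructor
          · rintro ⟨hxj, hx | hx⟩
            · exact Or.inl hx
            · exact Or.inr ⟨hxj, hx⟩
          · rintro (rfl | ⟨hxj, hx⟩)
            · exact ⟨fun h => hjb h.symm, Or.inl rfl⟩
            · exact ⟨hxj, Or.inr hx⟩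
        have hbnot : b ∉ s₁.erase j := fun hx => hbs₁ (Finset.mem_of_mem_erase hx)
        have hsub2 : s₁.erase j ⊆ s.erase j := Finset.erase_subset_erase _ hs₁sub
        have hsdiff : s.erase j \ s₁.erase j = s \ s₁ := by
          ext x
          simp only [Finset.mem_sdiff, Finset.mem_erase]
          constructor
          · rintro ⟨⟨hxj, hxs⟩, hx⟩
            exact ⟨hxs, fun hxs₁ => hx ⟨hxj, hxs₁⟩⟩
          · rintro ⟨hxs, hxs₁⟩
            exact ⟨⟨fun hxj => hxs₁ (hxj ▸ hjs₁), hxs⟩, fun hx => hxs₁ hx.2⟩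
        have hj2 : ∏ i ∈ s.erase j, γ i ≤ α := by
          rw [← Finset.prod_sdiff hsub2, hsdiff]
          rw [heq2, Finset.prod_insert hbnot] at hj
          have : ∏ i ∈ s₁.erase j, γ' i = ∏ i ∈ s₁.erase j, γ i := by
            apply Finset.prod_congr rfl
            intro x hx
            have : x ≠ b := fun h => hbs₁ (h ▸ Finset.mem_of_mem_erase hx)
            simp [hγ', this]
          rw [this] at hj
          simpa [hγ'] using hj
        obtain ⟨t, hts, htc, htp⟩ := ih (s.erase j) (Finset.erase_ssubset hjs) γ hj2
        exact ⟨t, hts.trans (Finset.erase_subset _ _), htc, htp⟩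

theorem inf_strongly_absorbing {A : Type*} [CommRing A] (γ₁ γ₂ : Ideal A) (n m : ℕ)
    (h₁ : IsStronglyAbsorbing γ₁ n) (h₂ : IsStronglyAbsorbing γ₂ m) :
    IsStronglyAbsorbing (γ₁ ⊓ γ₂) (n + m) := by
  intro γ hp
  obtain ⟨t₁, _, ht₁c, ht₁p⟩ := absorb_subset h₁ Finset.univ γ (hp.trans inf_le_left)
  obtain ⟨t₂, _, ht₂c, ht₂p⟩ := absorb_subset h₂ Finset.univ γ (hp.trans inf_le_right)
  have hne : t₁ ∪ t₂ ≠ Finset.univ := by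
    intro hcon
    have := Finset.card_union_le t₁ t₂
    rw [hcon, Finset.card_univ, Fintype.card_fin] at this
    omega
  have hj : ∃ j, j ∉ t₁ ∪ t₂ := by
    by_contra hcon
    push_neg at hcon
    exact hne (Finset.eq_univ_iff_forall.2 hcon)
  obtain ⟨j, hj⟩ := hj
  refine ⟨j, le_inf ?_ ?_⟩
  · refine (prod_anti (fun x hx => Finset.mem_erase.2
      ⟨?_, Finset.mem_univ x⟩) γ).trans ht₁p
    rintro rfl
    exact hj (Finset.mem_union_left _ hx)
  · refine (prod_anti (fun x hx => Finset.mem_erase.2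
      ⟨?_, Finset.mem_univ x⟩) γ).trans ht₂p
    rintro rfl
    exact hj (Finset.mem_union_right _ hx)
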